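/- Under the setting of the previous statement (g convex differentiable, l-Lipschitz gradient, bounded below by C₂, L > l, projected gradient iterates θ_m on Θ), there exists c ∈ ℝ such that g(θ_m) decreases monotonically to c, and for every positive integer M, min_{1 ≤ m ≤ M} ‖θ_{m+1} - θ_m‖₂² ≤ 2(g(θ₁) - c) / (M(L - l)). -/

import Mathlib

open scoped RealInnerProductSpace

lemma descent_lemma {d : ℕ} (g : EuclideanSpace ℝ (Fin d) → ℝ) (l : ℝ)
    (hdiff : Differentiable ℝ g)
    (hlip : ∀ θ θ' : EuclideanSpace ℝ (Fin d),
      ‖gradient g θ - gradient g θ'‖ ≤ l * ‖θ - θ'‖)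
    (x y : EuclideanSpace ℝ (Fin d)) :
    g y ≤ g x + ⟪gradient g x, y - x⟫ + l / 2 * ‖y - x‖ ^ 2 := by
  set Δ := y - x with hΔ
  have hgradcont : Continuous (gradient g) := by
    have : LipschitzWith l.toNNReal (gradient g) := by
      apply LipschitzWith.of_dist_le_mul
      intro a b
      calc dist (gradient g a) (gradient g b) = ‖gradient g a - gradient g b‖ := by
            rw [dist_eq_norm]
        _ ≤ l * ‖a - b‖ := hlip a b
        _ ≤ l.toNNReal * ‖a - b‖ := by
            apply mul_le_mul_of_nonneg_right (Real.le_coe_toNNReal l) (norm_nonneg _)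
        _ = l.toNNReal * dist a b := by rw [dist_eq_norm]
    exact this.continuous
  have hcurve : ∀ t : ℝ, HasDerivAt (fun t : ℝ => g (x + t • Δ))
      ⟪gradient g (x + t • Δ), Δ⟫ t := by
    intro t
    have h1 : HasDerivAt (fun t : ℝ => x + t • Δ) Δ t := by
      simpa using ((hasDerivAt_id t).smul_const Δ).const_add x
    have h2 := (hdiff (x + t • Δ)).hasGradientAt.hasFDerivAt
    have h3 := h2.comp_hasDerivAt t h1
    simpa [Function.comp_def] using h3
  have hcont : Continuous fun t : ℝ => ⟪gradient g (x + t • Δ), Δ⟫ := by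
    apply Continuous.inner
    · exact hgradcont.comp (by continuity)
    · exact continuous_const
  have hFTC : ∫ t in (0:ℝ)..1, ⟪gradient g (x + t • Δ), Δ⟫ = g y - g x := by
    have := intervalIntegral.integral_eq_sub_of_hasDerivAt
      (f := fun t : ℝ => g (x + t • Δ))
      (f' := fun t : ℝ => ⟪gradient g (x + t • Δ), Δ⟫)
      (fun t _ => hcurve t) (hcont.intervalIntegrable 0 1)
    simpa [hΔ] using this
  have hmono : ∫ t in (0:ℝ)..1, ⟪gradient g (x + t • Δ), Δ⟫ ≤
      ∫ t in (0:ℝ)..1, (⟪gradient g x, Δ⟫ + l * ‖Δ‖ ^ 2 * t) := by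
    apply intervalIntegral.integral_mono_on (by norm_num)
      (hcont.intervalIntegrable 0 1)
      ((by continuity : Continuous fun t : ℝ => ⟪gradient g x, Δ⟫ + l * ‖Δ‖ ^ 2 * t).intervalIntegrable 0 1)
    intro t ht
    rcases Set.mem_Icc.mp ht with ⟨ht0, _⟩
    have h1 : ⟪gradient g (x + t • Δ), Δ⟫ - ⟪gradient g x, Δ⟫
        = ⟪gradient g (x + t • Δ) - gradient g x, Δ⟫ := by
      rw [inner_sub_left]
    have h2 : ⟪gradient g (x + t • Δ) - gradient g x, Δ⟫ ≤
        ‖gradient g (x + t • Δ) - gradient g x‖ * ‖Δ‖ := real_inner_le_norm _ _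
    have h3 : ‖gradient g (x + t • Δ) - gradient g x‖ ≤ l * (t * ‖Δ‖) := by
      have := hlip (x + t • Δ) x
      simpa [norm_smul, abs_of_nonneg ht0] using this
    nlinarith [norm_nonneg Δ, norm_nonneg (gradient g (x + t • Δ) - gradient g x)]
  have hval : ∫ t in (0:ℝ)..1, (⟪gradient g x, Δ⟫ + l * ‖Δ‖ ^ 2 * t)
      = ⟪gradient g x, Δ⟫ + l / 2 * ‖Δ‖ ^ 2 := by
    rw [intervalIntegral.integral_add (g := fun t : ℝ => l * ‖Δ‖ ^ 2 * t) (intervalIntegrable_const)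
      ((continuous_const.mul continuous_id' :
        Continuous fun t : ℝ => l * ‖Δ‖ ^ 2 * t).intervalIntegrable 0 1)]
    rw [intervalIntegral.integral_const_mul, integral_id]
    simp
    ring
  linarith [hFTC ▸ hmono, hval ▸ hmono]

/-- Convergence rate of the warm-start projected gradient algorithm: the objective values
decrease monotonically to some `c`, and the smallest squared step over the first `M`
iterations is at most `2(g(θ₁) - c)/(M(L - l))`. -/
theorem projected_gradient_convergence_rate {d : ℕ}
    (g : EuclideanSpace ℝ (Fin d) → ℝ) (l L C₂ : ℝ)
    (hconv : ConvexOn ℝ Set.univ g)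
    (hdiff : Differentiable ℝ g)
    (hlip : ∀ θ θ' : EuclideanSpace ℝ (Fin d),
      ‖gradient g θ - gradient g θ'‖ ≤ l * ‖θ - θ'‖)
    (hbdd : ∀ θ, C₂ ≤ g θ)
    (hL : l < L)
    (Θ : Set (EuclideanSpace ℝ (Fin d))) (hΘ : Θ.Nonempty)
    (θ : ℕ → EuclideanSpace ℝ (Fin d))
    (hmem : ∀ m, θ m ∈ Θ)
    (hmin : ∀ m, ∀ θ' ∈ Θ, ‖θ (m + 1) - (θ m - (1 / L) • gradient g (θ m))‖ ^ 2 ≤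
      ‖θ' - (θ m - (1 / L) • gradient g (θ m))‖ ^ 2) :
    ∃ c : ℝ, Antitone (fun m => g (θ m)) ∧ (∀ m, c ≤ g (θ m)) ∧
      Filter.Tendsto (fun m => g (θ m)) Filter.atTop (nhds c) ∧
      ∀ M : ℕ, 1 ≤ M → ∃ m, 1 ≤ m ∧ m ≤ M ∧
        ‖θ (m + 1) - θ m‖ ^ 2 ≤ 2 * (g (θ 1) - c) / (M * (L - l)) := by
  have key : ∀ m, (L - l) / 2 * ‖θ (m + 1) - θ m‖ ^ 2 ≤ g (θ m) - g (θ (m + 1)) := by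
    intro m
    by_cases hd : ∃ v : EuclideanSpace ℝ (Fin d), v ≠ 0
    · obtain ⟨v, hv⟩ := hd
      have hvpos : 0 < ‖v‖ := norm_pos_iff.mpr hv
      have hl0 : 0 ≤ l := by
        have h1 := hlip v 0
        have h2 : (0:ℝ) ≤ ‖gradient g v - gradient g 0‖ := norm_nonneg _
        have h3 : 0 ≤ l * ‖v‖ := by simpa using le_trans h2 h1
        nlinarith
      have hLpos : 0 < L := lt_of_le_of_lt hl0 hL
      set Δ := θ (m + 1) - θ m with hΔdef
      set G := gradient g (θ m) with hGdef
      have hproj := hmin m (θ m) (hmem m)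
      have e1 : θ (m + 1) - (θ m - (1 / L) • G) = Δ + (1 / L) • G := by
        rw [hΔdef]; abel
      have e2 : θ m - (θ m - (1 / L) • G) = (1 / L) • G := by abel
      rw [e1, e2] at hproj
      rw [norm_add_sq_real] at hproj
      have hinner : ⟪Δ, (1 / L) • G⟫ = (1 / L) * ⟪Δ, G⟫ := real_inner_smul_right _ _ _
      rw [hinner] at hproj
      have hkey : ⟪Δ, G⟫ ≤ -(L / 2) * ‖Δ‖ ^ 2 := by
        have h4 : ‖Δ‖ ^ 2 + 2 * ((1 / L) * ⟪Δ, G⟫) ≤ 0 := by linarith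
        have h5 : L * (‖Δ‖ ^ 2 + 2 * ((1 / L) * ⟪Δ, G⟫)) ≤ 0 :=
          mul_nonpos_of_nonneg_of_nonpos hLpos.le h4
        have h6 : L * (2 * ((1 / L) * ⟪Δ, G⟫)) = 2 * ⟪Δ, G⟫ := by
          field_simp
        nlinarith
      have hdesc := descent_lemma g l hdiff hlip (θ m) (θ (m + 1))
      rw [← hΔdef, ← hGdef] at hdesc
      have hcomm : ⟪G, Δ⟫ = ⟪Δ, G⟫ := real_inner_comm _ _
      rw [hcomm] at hdesc
      linarith
    · push_neg at hd
      have h1 : θ (m + 1) - θ m = 0 := hd _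
      have h2 : θ (m + 1) = θ m := by
        rwa [sub_eq_zero] at h1
      rw [h1, h2]
      simp
  have hLl : 0 < L - l := by linarith
  have hanti : Antitone fun m => g (θ m) := by
    apply antitone_nat_of_succ_le
    intro m
    have := key m
    nlinarith [sq_nonneg ‖θ (m + 1) - θ m‖]
  have hbddbel : BddBelow (Set.range fun m => g (θ m)) := by
    refine ⟨C₂, ?_⟩
    rintro y ⟨m, rfl⟩
    exact hbdd _
  refine ⟨⨅ m, g (θ m), hanti, fun m => ciInf_le hbddbel m,
    tendsto_atTop_ciInf hanti hbddbel, ?_⟩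
  set c := ⨅ m, g (θ m) with hc
  have hle : ∀ m, c ≤ g (θ m) := fun m => ciInf_le hbddbel m
  intro M hM
  have hMpos : (0:ℝ) < M := by exact_mod_cast hM
  have hsum : ∑ i ∈ Finset.range M, (L - l) / 2 * ‖θ (i + 1 + 1) - θ (i + 1)‖ ^ 2 ≤
      g (θ 1) - c := by
    calc ∑ i ∈ Finset.range M, (L - l) / 2 * ‖θ (i + 1 + 1) - θ (i + 1)‖ ^ 2
        ≤ ∑ i ∈ Finset.range M, (g (θ (i + 1)) - g (θ (i + 1 + 1))) :=
          Finset.sum_le_sum fun i _ => key (i + 1)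
      _ = g (θ 1) - g (θ (M + 1)) := by
          have := Finset.sum_range_sub' (f := fun i => g (θ (i + 1))) M
          simpa using this
      _ ≤ g (θ 1) - c := by linarith [hle (M + 1)]
  have hsum2 : ∑ i ∈ Finset.range M, (L - l) / 2 * ‖θ (i + 1 + 1) - θ (i + 1)‖ ^ 2 ≤
      ∑ _i ∈ Finset.range M, (g (θ 1) - c) / M := by
    rw [Finset.sum_const, Finset.card_range, nsmul_eq_mul]
    rw [mul_div_cancel₀ _ (ne_of_gt hMpos)]
    exact hsum
  obtain ⟨i, hi, hib⟩ := Finset.exists_le_of_sum_le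
    ⟨0, Finset.mem_range.mpr (by omega)⟩ hsum2
  have hi' := Finset.mem_range.mp hi
  refine ⟨i + 1, by omega, by omega, ?_⟩
  rw [le_div_iff₀ hMpos] at hib
  rw [le_div_iff₀ (by positivity : (0:ℝ) < (M:ℝ) * (L - l))]
  nlinarith
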